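/- Let m > 0, ω ∈ (-m,m), and suppose f : (0,∞) → ℝ is continuous, nonnegative, tends to 0 at infinity, and satisfies the hypotheses of the exponential comparison: for every ε ∈ (0, 2m(m-ω)) there is R_ε with f'' ≥ (2m(m-ω) - ε) f on [R_ε, ∞). Then for each such ε there is a constant C_ε > 0 with f(r) ≤ C_ε e^{-√(2m(m-ω)-ε)·r} for all r > 0. -/

import Mathlib

open Set Filter Topology

set_option maxHeartbeats 1000000

/-- Global exponential decay: if `f ≥ 0` is continuous on `[0,∞)`, tends to `0` at
infinity, and for every `ε ∈ (0, 2m(m-ω))` satisfies `f'' ≥ (2m(m-ω)-ε) f` on some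
`[R_ε, ∞)`, then `f(r) ≤ C_ε e^{-√(2m(m-ω)-ε) r}` for all `r > 0`. -/
theorem stmt11 (m ω : ℝ) (hm : 0 < m) (hω : ω ∈ Set.Ioo (-m) m) (f : ℝ → ℝ)
    (hc : ContinuousOn f (Set.Ici 0)) (hnn : ∀ r > (0 : ℝ), 0 ≤ f r)
    (hlim : Filter.Tendsto f Filter.atTop (nhds 0))
    (hcomp : ∀ ε ∈ Set.Ioo 0 (2 * m * (m - ω)),
      ∃ R > (0 : ℝ), ∀ r, R ≤ r → (2 * m * (m - ω) - ε) * f r ≤ deriv (deriv f) r) :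
    ∀ ε ∈ Set.Ioo 0 (2 * m * (m - ω)),
      ∃ C > (0 : ℝ), ∀ r > (0 : ℝ),
        f r ≤ C * Real.exp (-Real.sqrt (2 * m * (m - ω) - ε) * r) := by
  intro ε hε
  obtain ⟨R, hR0, hR⟩ := hcomp ε hε
  set k := 2 * m * (m - ω) - ε with hk_def
  have hk : 0 < k := by
    have := hε.2
    simp only [hk_def]
    linarith
  set μ := Real.sqrt k with hμ_def
  have hμ : 0 < μ := Real.sqrt_pos.mpr hk
  have hμ2 : μ * μ = k := Real.mul_self_sqrt hk.le
  have hfR : 0 ≤ f R := hnn R hR0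
  set A := (f R + 1) * Real.exp (μ * R) with hA_def
  have hA : 0 < A := by positivity
  set φ := fun x : ℝ => A * Real.exp (-μ * x) with hφ_def
  have hφd : ∀ x, HasDerivAt φ (-μ * φ x) x := by
    intro x
    have h1 : HasDerivAt (fun y : ℝ => -μ * y) (-μ) x := by
      simpa using (hasDerivAt_id x).const_mul (-μ)
    have h2 := h1.exp.const_mul A
    refine h2.congr_deriv ?_
    show _ = -μ * (A * Real.exp (-μ * x))
    ring
  have hφpos : ∀ x, 0 < φ x := fun x => by positivity
  have hφcont : Continuous φ := by
    simp only [hφ_def]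
    continuity
  have hφanti : StrictAnti φ := fun a b hab =>
    mul_lt_mul_of_pos_left (Real.exp_lt_exp.mpr (by nlinarith)) hA
  -- the key comparison on [R, ∞)
  have key : ∀ r, R ≤ r → f r ≤ φ r := by
    by_contra hcon
    push_neg at hcon
    obtain ⟨r1, hr1R, hr1⟩ := hcon
    set h := fun x => f x - φ x with hh_def
    have hhr1 : 0 < h r1 := by simp only [hh_def]; linarith
    have hch : ContinuousOn h (Ici 0) := hc.sub hφcont.continuousOn
    have hφtend : Tendsto φ atTop (𝓝 0) := by
      have h1 : Tendsto (fun x : ℝ => μ * x) atTop atTop :=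
        Tendsto.const_mul_atTop hμ tendsto_id
      have h2 : Tendsto (fun x : ℝ => Real.exp (-(μ * x))) atTop (𝓝 0) :=
        Real.tendsto_exp_neg_atTop_nhds_zero.comp h1
      have h3 := h2.const_mul A
      simp only [mul_zero] at h3
      simpa [hφ_def, neg_mul] using h3
    have hhtend : Tendsto h atTop (𝓝 0) := by
      have := hlim.sub hφtend
      simpa [hh_def] using this
    have hev : ∀ᶠ x in atTop, h x < h r1 := hhtend.eventually_lt_const hhr1
    obtain ⟨T, hT⟩ := eventually_atTop.mp hev
    set T' := max T r1 with hT'_def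
    have hRT' : R ≤ T' := le_trans hr1R (le_max_right _ _)
    have hIcc_sub : Icc R T' ⊆ Ici (0:ℝ) := fun x hx => le_trans hR0.le hx.1
    obtain ⟨r0, hr0mem, hr0max⟩ :=
      isCompact_Icc.exists_isMaxOn (nonempty_Icc.mpr hRT') (hch.mono hIcc_sub)
    rw [isMaxOn_iff] at hr0max
    have hr1mem : r1 ∈ Icc R T' := ⟨hr1R, le_max_right _ _⟩
    have hhr0 : 0 < h r0 := lt_of_lt_of_le hhr1 (hr0max r1 hr1mem)
    have hφR : φ R = f R + 1 := by
      simp only [hφ_def, hA_def, mul_assoc, ← Real.exp_add]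
      simp
    have hhR : h R < 0 := by simp only [hh_def, hφR]; linarith
    have hRr0 : R < r0 := by
      rcases lt_or_eq_of_le hr0mem.1 with h' | h'
      · exact h'
      · exfalso; rw [← h'] at hhr0; linarith
    have hmax : ∀ x, R ≤ x → h x ≤ h r0 := by
      intro x hx
      by_cases hxT : x ≤ T'
      · exact hr0max x ⟨hx, hxT⟩
      · have h1 : T ≤ x := le_trans (le_max_left T r1) (le_of_not_ge hxT)
        have := hT x h1
        linarith [hr0max r1 hr1mem]
    have hcontAt : ContinuousAt h r0 :=
      hch.continuousAt (Filter.mem_of_superset (Ioi_mem_nhds (lt_trans hR0 hRr0))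
        Ioi_subset_Ici_self)
    have hev2 : ∀ᶠ x in 𝓝 r0, 0 < h x ∧ R < x := by
      have ev1 : ∀ᶠ x in 𝓝 r0, h x ∈ Ioi 0 := hcontAt (Ioi_mem_nhds hhr0)
      have ev2 : ∀ᶠ x in 𝓝 r0, x ∈ Ioi R := Ioi_mem_nhds hRr0
      filter_upwards [ev1, ev2] with x h1 h2
      exact ⟨h1, h2⟩
    obtain ⟨δ0, hδ0, hball⟩ := Metric.eventually_nhds_iff.mp hev2
    set N := Ioo (r0 - δ0) (r0 + δ0) with hN_def
    have hN : ∀ x ∈ N, 0 < h x ∧ R < x := by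
      intro x hx
      apply hball
      rw [Real.dist_eq, abs_sub_lt_iff]
      constructor <;> [linarith [hx.2]; linarith [hx.1]]
    have hr0N : r0 ∈ N := ⟨by linarith, by linarith⟩
    set g := deriv f with hg_def
    have hfg : ∀ x ∈ N, φ x < f x := by
      intro x hx
      have := (hN x hx).1
      simp only [hh_def] at this
      linarith
    have hgd : ∀ x ∈ N, 0 < deriv g x := by
      intro x hx
      have h2 := hR x (hN x hx).2.le
      have h3 : 0 < f x := lt_trans (hφpos x) (hfg x hx)
      nlinarith
    have hgdiff : ∀ x ∈ N, DifferentiableAt ℝ g x := fun x hx =>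
      differentiableAt_of_deriv_ne_zero (ne_of_gt (hgd x hx))
    have hgmono : StrictMonoOn g N :=
      strictMonoOn_of_deriv_pos (convex_Ioo _ _)
        (fun x hx => (hgdiff x hx).continuousAt.continuousWithinAt)
        (by rw [interior_Ioo]; exact hgd)
    rcases le_or_gt 0 (g r0) with hg0 | hg0
    · -- g r0 ≥ 0 : f strictly increases to the right of r0
      set b := r0 + δ0 / 2 with hb_def
      have hbN : b ∈ N := ⟨by simp only [hb_def]; linarith, by simp only [hb_def]; linarith⟩
      have hbR : R < b := (hN b hbN).2
      have hmono : StrictMonoOn f (Icc r0 b) := by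
        apply strictMonoOn_of_deriv_pos (convex_Icc _ _)
        · apply hc.mono
          intro x hx
          exact le_trans (le_trans hR0.le hRr0.le) hx.1
        · rw [interior_Icc]
          intro x hx
          have hxN : x ∈ N := ⟨by linarith [hx.1], by
            have := hx.2; simp only [hb_def] at this; linarith⟩
          exact lt_of_le_of_lt hg0 (hgmono hr0N hxN hx.1)
      have hr0b : r0 < b := by simp only [hb_def]; linarith
      have hfb : f r0 < f b := hmono ⟨le_refl _, hr0b.le⟩ ⟨hr0b.le, le_refl _⟩ hr0b
      have hφb : φ b < φ r0 := hφanti hr0b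
      have h1 : h r0 < h b := by simp only [hh_def]; linarith
      have h2 : h b ≤ h r0 := hmax b hbR.le
      linarith
    · -- g r0 < 0 : local max gives q r0 = 0, then h strictly decreases to the left
      have hfdiffr0 : DifferentiableAt ℝ f r0 :=
        differentiableAt_of_deriv_ne_zero (ne_of_lt hg0)
      have hloc : IsLocalMax h r0 := by
        filter_upwards [Ioi_mem_nhds hRr0] with x hx
        exact hmax x hx.le
      have hder0 : deriv h r0 = 0 := hloc.deriv_eq_zero
      have hq0 : g r0 + μ * φ r0 = 0 := by
        have h1 : deriv h r0 = deriv f r0 - deriv φ r0 := by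
          rw [hh_def]
          exact deriv_sub hfdiffr0 (hφd r0).differentiableAt
        rw [(hφd r0).deriv] at h1
        rw [hder0] at h1
        simp only [hg_def]
        ring_nf at h1 ⊢
        linarith [h1]
      set q := fun x => g x + μ * φ x with hq_def
      have hqdiff : ∀ x ∈ N, DifferentiableAt ℝ q x := fun x hx =>
        (hgdiff x hx).add (((hφd x).differentiableAt).const_mul μ)
      have hqderiv : ∀ x ∈ N, 0 < deriv q x := by
        intro x hx
        have h1 : deriv q x = deriv g x + μ * (-μ * φ x) := by
          rw [hq_def, deriv_fun_add (hgdiff x hx) ((hφd x).differentiableAt.const_mul μ),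
            deriv_const_mul μ (hφd x).differentiableAt, (hφd x).deriv]
        have h2 := hR x (hN x hx).2.le
        have h3 := hfg x hx
        rw [h1]
        nlinarith [hμ2, hφpos x]
      have hqmono : StrictMonoOn q N :=
        strictMonoOn_of_deriv_pos (convex_Ioo _ _)
          (fun x hx => (hqdiff x hx).continuousAt.continuousWithinAt)
          (by rw [interior_Ioo]; exact hqderiv)
      set a := r0 - δ0 / 2 with ha_def
      have haN : a ∈ N := ⟨by simp only [ha_def]; linarith, by simp only [ha_def]; linarith⟩
      have har0 : a < r0 := by simp only [ha_def]; linarith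
      have hanti : StrictAntiOn h (Icc a r0) := by
        apply strictAntiOn_of_deriv_neg (convex_Icc _ _)
        · apply hch.mono
          intro x hx
          exact le_trans (le_trans hR0.le (hN a haN).2.le) hx.1
        · rw [interior_Icc]
          intro x hx
          have hxN : x ∈ N := ⟨by
            have := hx.1; simp only [ha_def] at this; linarith,
            by linarith [hx.2]⟩
          have hqx : q x < 0 := by
            have := hqmono hxN hr0N hx.2
            have hqr0 : q r0 = 0 := hq0
            linarith
          have hgx : g x < 0 := by
            have h5 : 0 < μ * φ x := by positivity
            simp only [hq_def] at hqx
            linarith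
          have hfd : DifferentiableAt ℝ f x :=
            differentiableAt_of_deriv_ne_zero (ne_of_lt hgx)
          rw [hh_def, deriv_fun_sub hfd (hφd x).differentiableAt, (hφd x).deriv]
          simp only [hq_def, hg_def] at hqx
          ring_nf at hqx ⊢
          linarith
      have h1 : h r0 < h a :=
        hanti ⟨le_refl _, har0.le⟩ ⟨har0.le, le_refl _⟩ har0
      have h2 : h a ≤ h r0 := hmax a (hN a haN).2.le
      linarith
  -- assemble the global constant
  obtain ⟨xM, hxM, hxMmax⟩ :=
    isCompact_Icc.exists_isMaxOn (nonempty_Icc.mpr hR0.le)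
      (hc.mono (Icc_subset_Ici_self : Icc (0:ℝ) R ⊆ Ici 0))
  rw [isMaxOn_iff] at hxMmax
  refine ⟨max A (f xM * Real.exp (μ * R)), lt_max_iff.mpr (Or.inl hA), ?_⟩
  intro r hr
  rcases le_or_gt R r with hRr | hRr
  · calc f r ≤ φ r := key r hRr
      _ = A * Real.exp (-μ * r) := rfl
      _ ≤ max A (f xM * Real.exp (μ * R)) * Real.exp (-μ * r) :=
        mul_le_mul_of_nonneg_right (le_max_left _ _) (Real.exp_nonneg _)
  · have hfr : f r ≤ f xM := hxMmax r ⟨hr.le, hRr.le⟩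
    have h0 : 0 ≤ f xM := le_trans (hnn r hr) hfr
    have hexp : Real.exp (-μ * R) ≤ Real.exp (-μ * r) :=
      Real.exp_le_exp.mpr (by nlinarith)
    calc f r ≤ f xM := hfr
      _ = f xM * Real.exp (μ * R) * Real.exp (-μ * R) := by
          rw [mul_assoc, ← Real.exp_add]; simp
      _ ≤ f xM * Real.exp (μ * R) * Real.exp (-μ * r) :=
          mul_le_mul_of_nonneg_left hexp (by positivity)
      _ ≤ max A (f xM * Real.exp (μ * R)) * Real.exp (-μ * r) :=
          mul_le_mul_of_nonneg_right (le_max_right _ _) (Real.exp_nonneg _)
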